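/- arXiv:0708.3727 — 2 statements merged into one kernel-verified Lean document; each statement's English description precedes it below -/
import Mathlib

section
/- Let F be a finitely generated free pro-p group, R a closed normal subgroup, N = R/closure([R,R]) with filtration N_k = image of R ∩ γ_k(F) in N. Then the intersection ⋂_{k≥1} N_k is trivial. -/
set_option linter.unusedSectionVars false

open scoped BigOperators

section ContCohomology

variable (G : Type*) [Group G] [TopologicalSpace G]
variable (M : Type*) [AddCommGroup M] [TopologicalSpace M] [IsTopologicalAddGroup M]

/-- The differential on inhomogeneous cochains of a topological group `G` with
coefficients in a topological abelian group `M`, for the action `ρ`. -/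
def ccd (ρ : G →* Multiplicative (AddAut M)) (n : ℕ) : ((Fin n → G) → M) →+ ((Fin (n + 1) → G) → M) where
  toFun f := fun g =>
    Multiplicative.toAdd (ρ (g 0)) (f fun i => g i.succ) +
      ∑ j : Fin (n + 1), ((-1 : ℤ) ^ ((j : ℕ) + 1)) • f (Fin.contractNth j (· * ·) g)
  map_zero' := by
    funext g
    simp
  map_add' f₁ f₂ := by
    funext g
    simp only [Pi.add_apply, map_add, smul_add, Finset.sum_add_distrib]
    abel

/-- Continuous cochains. -/
def contCochain (n : ℕ) : AddSubgroup ((Fin n → G) → M) where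
  carrier := {f | Continuous f}
  zero_mem' := continuous_const
  add_mem' hf hg := hf.add hg
  neg_mem' hf := hf.neg

/-- Continuous cocycles. -/
def contCocycle (ρ : G →* Multiplicative (AddAut M)) (n : ℕ) : AddSubgroup ((Fin n → G) → M) :=
  contCochain G M n ⊓ (ccd G M ρ n).ker

/-- Continuous coboundaries. -/
def contCoboundary (ρ : G →* Multiplicative (AddAut M)) : (n : ℕ) → AddSubgroup ((Fin n → G) → M)
  | 0 => ⊥
  | (n + 1) => (contCochain G M n).map (ccd G M ρ n)

/-- Continuous group cohomology of a topological group with coefficients in a topological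
abelian group, via inhomogeneous continuous cochains. -/
def Hcont (ρ : G →* Multiplicative (AddAut M)) (n : ℕ) : Type _ :=
  contCocycle G M ρ n ⧸ (contCoboundary G M ρ n).addSubgroupOf (contCocycle G M ρ n)

noncomputable instance (ρ : G →* Multiplicative (AddAut M)) (n : ℕ) : AddCommGroup (Hcont G M ρ n) :=
  QuotientAddGroup.Quotient.addCommGroup _

end ContCohomology

section Restriction

variable {K G : Type*} [Group K] [Group G] [TopologicalSpace K] [TopologicalSpace G]
variable (M : Type*) [AddCommGroup M] [TopologicalSpace M] [IsTopologicalAddGroup M]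

/-- Restriction of cochains along a group homomorphism. -/
def resCochain (φ : K →* G) (n : ℕ) : ((Fin n → G) → M) →+ ((Fin n → K) → M) where
  toFun f := fun g => f (φ ∘ g)
  map_zero' := rfl
  map_add' _ _ := rfl

lemma comp_contractNth (φ : K →* G) {n : ℕ} (j : Fin (n + 1)) (g : Fin (n + 1) → K) :
    (φ ∘ Fin.contractNth j (· * ·) g) = Fin.contractNth j (· * ·) (φ ∘ g) := by
  funext i
  simp only [Function.comp_apply, Fin.contractNth]
  split_ifs <;> simp

lemma resCochain_comm_ccd (φ : K →* G) (n : ℕ) (f : (Fin n → G) → M) :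
    resCochain M φ (n + 1) (ccd G M 1 n f) = ccd K M 1 n (resCochain M φ n f) := by
  funext g
  simp only [resCochain, ccd, AddMonoidHom.coe_mk, ZeroHom.coe_mk, MonoidHom.one_apply,
    toAdd_one, AddAut.zero_apply]
  congr 1
  refine Finset.sum_congr rfl fun j _ => ?_
  rw [comp_contractNth]

lemma resCochain_continuous (φ : K →* G) (hφ : Continuous φ) (n : ℕ)
    (f : (Fin n → G) → M) (hf : Continuous f) : Continuous (resCochain M φ n f) :=
  hf.comp (continuous_pi fun i => hφ.comp (continuous_apply i))

/-- Restriction on cocycles. -/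
def resCocycle (φ : K →* G) (hφ : Continuous φ) (n : ℕ) :
    contCocycle G M 1 n →+ contCocycle K M 1 n :=
  AddMonoidHom.codRestrict ((resCochain M φ n).comp (contCocycle G M 1 n).subtype) _
    (by
      rintro ⟨f, hf⟩
      simp only [contCocycle, AddSubgroup.mem_inf] at hf ⊢
      obtain ⟨hf1, hf2⟩ := hf
      constructor
      · exact resCochain_continuous M φ hφ n f hf1
      · rw [AddMonoidHom.mem_ker] at hf2 ⊢
        show ccd K M 1 n (resCochain M φ n f) = 0
        rw [← resCochain_comm_ccd M φ n f, hf2]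
        rfl)

/-- The canonical map on continuous group cohomology (with trivial coefficients) induced
by a continuous group homomorphism. -/
def Hres (φ : K →* G) (hφ : Continuous φ) (n : ℕ) : Hcont G M 1 n →+ Hcont K M 1 n :=
  QuotientAddGroup.map _ _ (resCocycle M φ hφ n)
    (by
      intro x hx
      rw [AddSubgroup.mem_comap, AddSubgroup.mem_addSubgroupOf]
      rw [AddSubgroup.mem_addSubgroupOf] at hx
      cases n with
      | zero =>
        simp only [contCoboundary, AddSubgroup.mem_bot] at hx ⊢
        show resCochain M φ 0 (x : (Fin 0 → G) → M) = 0
        rw [hx]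
        exact map_zero _
      | succ n =>
        obtain ⟨u, hu, hux⟩ := hx
        refine ⟨resCochain M φ n u, resCochain_continuous M φ hφ n u hu, ?_⟩
        show ccd K M 1 n (resCochain M φ n u) = _
        rw [← resCochain_comm_ccd M φ n u, hux]
        rfl)

end Restriction

section Discrete

variable (G : Type*) [Group G]
variable (M : Type*) [AddCommGroup M] [TopologicalSpace M] [IsTopologicalAddGroup M]

/-- Ordinary group cohomology of a discrete group, as continuous cohomology for the
bottom (discrete) topology. -/
abbrev Hdisc (n : ℕ) : Type _ := @Hcont G _ ⊥ M _ _ _ 1 n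

/-- The comparison map from the continuous cohomology of a topological group `Ghat` to
the ordinary cohomology of a (discrete) group `G`, induced by `φ : G →* Ghat`. -/
def HcompMap (Ghat : Type*) [Group Ghat] [TopologicalSpace Ghat] (φ : G →* Ghat) (n : ℕ) :
    Hcont Ghat M 1 n →+ Hdisc G M n :=
  @Hres G Ghat _ _ ⊥ _ M _ _ _ φ continuous_bot n

end Discrete

section ProP

/-- A pro-`p` group: a compact, Hausdorff, totally disconnected topological group all of whose
finite continuous quotients are `p`-groups. -/
structure IsProPGroup (p : ℕ) (G : Type*) [Group G] [TopologicalSpace G] : Prop where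
  compact : CompactSpace G
  t2 : T2Space G
  td : TotallyDisconnectedSpace G
  topGrp : IsTopologicalGroup G
  proP : ∀ (P : Type) [Group P] [Finite P] (ψ : G →* P),
    (∀ s : Set P, IsOpen (ψ ⁻¹' s)) → Function.Surjective ψ → IsPGroup p P

/-- `φ : G →* Ghat` exhibits the topological group `Ghat` as the pro-`p` completion of the
discrete group `G`: `Ghat` is a pro-`p` group, `φ` has dense image, and every homomorphism
from `G` to a finite `p`-group factors uniquely through a continuous homomorphism on `Ghat`. -/
structure IsProPCompletion (p : ℕ) {G : Type*} [Group G] {Ghat : Type*} [Group Ghat]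
    [TopologicalSpace Ghat] (φ : G →* Ghat) : Prop where
  compact : CompactSpace Ghat
  t2 : T2Space Ghat
  td : TotallyDisconnectedSpace Ghat
  topGrp : IsTopologicalGroup Ghat
  dense : DenseRange φ
  proP : ∀ (P : Type) [Group P] [Finite P] (ψ : Ghat →* P),
    (∀ s : Set P, IsOpen (ψ ⁻¹' s)) → Function.Surjective ψ → IsPGroup p P
  lift : ∀ (P : Type) [Group P] [Finite P], IsPGroup p P → ∀ f : G →* P,
    ∃! g : Ghat →* P, (∀ s : Set P, IsOpen (g ⁻¹' s)) ∧ g.comp φ = f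

/-- Additive version of `IsProPCompletion`. -/
structure IsProPCompletionAdd (p : ℕ) {G : Type*} [AddGroup G] {Ghat : Type*} [AddGroup Ghat]
    [TopologicalSpace Ghat] (φ : G →+ Ghat) : Prop where
  compact : CompactSpace Ghat
  t2 : T2Space Ghat
  td : TotallyDisconnectedSpace Ghat
  topGrp : IsTopologicalAddGroup Ghat
  dense : DenseRange φ
  proP : ∀ (P : Type) [AddGroup P] [Finite P] (ψ : Ghat →+ P),
    (∀ s : Set P, IsOpen (ψ ⁻¹' s)) → Function.Surjective ψ → IsPGroup p (Multiplicative P)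
  lift : ∀ (P : Type) [AddGroup P] [Finite P], IsPGroup p (Multiplicative P) → ∀ f : G →+ P,
    ∃! g : Ghat →+ P, (∀ s : Set P, IsOpen (g ⁻¹' s)) ∧ g.comp φ = f

/-- A free pro-`p` group: the pro-`p` completion of a free group. -/
def IsFreeProPGroup (p : ℕ) (F : Type*) [Group F] [TopologicalSpace F] : Prop :=
  ∃ (X : Type) (φ : FreeGroup X →* F), IsProPCompletion p φ

/-- The lower central series of a topological group, defined with closures:
`gammaHat F 0 = F` and `gammaHat F (k+1)` is the closure of `[gammaHat F k, F]`.
(Indexing: `gammaHat F k` is `γ_{k+1}` of the paper.) -/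
def gammaHat (F : Type*) [Group F] [TopologicalSpace F] [IsTopologicalGroup F] :
    ℕ → Subgroup F
  | 0 => ⊤
  | (k + 1) => Subgroup.topologicalClosure ⁅gammaHat F k, (⊤ : Subgroup F)⁆

end ProP

section ZModTop

instance (n : ℕ) : TopologicalSpace (ZMod n) := ⊥
instance (n : ℕ) : DiscreteTopology (ZMod n) := ⟨rfl⟩
instance (n : ℕ) : IsTopologicalAddGroup (ZMod n) where
  continuous_add := continuous_of_discreteTopology
  continuous_neg := continuous_of_discreteTopology

end ZModTop


section Aux

variable {F : Type} [Group F] [TopologicalSpace F] [IsTopologicalGroup F]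

lemma gammaHat_normal (k : ℕ) : (gammaHat F k).Normal := by
  induction k with
  | zero => rw [show gammaHat F 0 = ⊤ from rfl]; infer_instance
  | succ k ih =>
    haveI := ih
    exact Subgroup.is_normal_topologicalClosure _

lemma gammaHat_isClosed (k : ℕ) : IsClosed ((gammaHat F k : Subgroup F) : Set F) := by
  cases k with
  | zero => simp [gammaHat]
  | succ k => exact Subgroup.isClosed_topologicalClosure _

lemma gammaHat_antitone : Antitone (gammaHat F) := by
  apply antitone_nat_of_succ_le
  intro k
  haveI := gammaHat_normal (F := F) k
  exact Subgroup.topologicalClosure_minimal _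
    (Subgroup.commutator_le_left _ _) (gammaHat_isClosed k)

lemma preimage_open_of_openSubgroup {H : Subgroup F} [H.Normal] (hH : IsOpen (H : Set F))
    (s : Set (F ⧸ H)) : IsOpen ((QuotientGroup.mk' H) ⁻¹' s) := by
  have : (QuotientGroup.mk' H) ⁻¹' s =
      ⋃ g ∈ (QuotientGroup.mk' H) ⁻¹' s, (fun h => g * h) '' (H : Set F) := by
    ext x
    simp only [Set.mem_iUnion, Set.mem_image, Set.mem_preimage]
    constructor
    · intro hx
      exact ⟨x, hx, 1, H.one_mem, mul_one x⟩
    · rintro ⟨g, hg, h, hh, rfl⟩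
      have : (QuotientGroup.mk' H) (g * h) = (QuotientGroup.mk' H) g :=
        QuotientGroup.mk_mul_of_mem g hh
      rw [this]; exact hg
  rw [this]
  exact isOpen_biUnion fun g _ => (isOpenMap_mul_left g) _ hH

/-- In a pro-p group (compact, T2, totally disconnected, with all finite continuous
quotients p-groups), the intersection of the closed lower central series is trivial. -/
lemma gammaHat_inter_trivial (p : ℕ) [Fact p.Prime] [CompactSpace F] [T2Space F]
    [TotallyDisconnectedSpace F]
    (hp : ∀ (P : Type) [Group P] [Finite P] (ψ : F →* P),
      (∀ s : Set P, IsOpen (ψ ⁻¹' s)) → Function.Surjective ψ → IsPGroup p P)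
    {x : F} (hx : ∀ k, x ∈ gammaHat F k) : x = 1 := by
  by_contra hne
  obtain ⟨W, hW, h1W, hxW⟩ := exists_isClopen_of_totally_separated
    (show (1 : F) ≠ x from fun h => hne h.symm)
  obtain ⟨H, hHW⟩ := IsTopologicalGroup.exist_openNormalSubgroup_sub_clopen_nhds_of_one hW h1W
  haveI : Finite (F ⧸ H.toSubgroup) :=
    Subgroup.quotient_finite_of_isOpen H.toSubgroup H.isOpen
  set ψ := QuotientGroup.mk' H.toSubgroup
  have hcont : ∀ s : Set (F ⧸ H.toSubgroup), IsOpen (ψ ⁻¹' s) :=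
    preimage_open_of_openSubgroup H.isOpen
  have hPG : IsPGroup p (F ⧸ H.toSubgroup) :=
    hp _ ψ hcont (QuotientGroup.mk'_surjective _)
  haveI : Group.IsNilpotent (F ⧸ H.toSubgroup) := hPG.isNilpotent
  obtain ⟨n, hn⟩ := nilpotent_iff_lowerCentralSeries.mp ‹_›
  have key : ∀ k, gammaHat F k ≤ (Subgroup.lowerCentralSeries (⊤ : Subgroup (F ⧸ H.toSubgroup)) k).comap ψ := by
    intro k
    induction k with
    | zero => exact le_top.trans (by simp [lowerCentralSeries])
    | succ k ih =>
      haveI := gammaHat_normal (F := F) k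
      apply Subgroup.topologicalClosure_minimal
      · rw [← Subgroup.map_le_iff_le_comap, Subgroup.map_commutator]
        rw [lowerCentralSeries_succ]
        exact Subgroup.commutator_mono
          (Subgroup.map_le_iff_le_comap.mpr ih) le_top
      · have : ((Subgroup.lowerCentralSeries (⊤ : Subgroup (F ⧸ H.toSubgroup)) (k+1)).comap ψ : Set F) =
            ψ ⁻¹' (Subgroup.lowerCentralSeries (⊤ : Subgroup (F ⧸ H.toSubgroup)) (k+1) : Set (F ⧸ H.toSubgroup)) := rfl
        rw [this, ← isOpen_compl_iff, ← Set.preimage_compl]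
        exact hcont _
  have := key n (hx n)
  rw [hn] at this
  simp only [Subgroup.mem_comap, Subgroup.mem_bot] at this
  have : x ∈ H.toSubgroup := (QuotientGroup.eq_one_iff x).mp this
  exact hxW (hHW this)

end Aux
section Statement6

variable {F : Type} [Group F] [TopologicalSpace F] [IsTopologicalGroup F]

instance (R : Subgroup F) [R.Normal] : (Subgroup.topologicalClosure ⁅R, R⁆).Normal :=
  Subgroup.is_normal_topologicalClosure _

instance (R : Subgroup F) [R.Normal] :
    ((Subgroup.topologicalClosure ⁅R, R⁆).subgroupOf R).Normal :=
  Subgroup.Normal.subgroupOf inferInstance R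

/-- Let `F` be a finitely generated free pro-`p` group, `R` a closed normal
subgroup, `N = R/closure [R,R]` with filtration `N_k` given by the images of `R ∩ γ_k(F)`.
Then `⋂_{k ≥ 1} N_k` is trivial.  (Here `gammaHat F k = γ_{k+1}(F)`.) -/
theorem statement6 (p : ℕ) [Fact p.Prime] (d : ℕ)
    (φ : FreeGroup (Fin d) →* F) (h : IsProPCompletion p φ)
    (R : Subgroup F) [R.Normal] (hRclosed : IsClosed (R : Set F)) :
    (⨅ k : ℕ,
      Subgroup.map (QuotientGroup.mk' ((Subgroup.topologicalClosure ⁅R, R⁆).subgroupOf R))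
        ((R ⊓ gammaHat F k).subgroupOf R)) = ⊥ := by
  haveI := h.compact
  haveI := h.t2
  haveI := h.td
  set Q := Subgroup.topologicalClosure ⁅R, R⁆ with hQdef
  set f := QuotientGroup.mk' (Q.subgroupOf R) with hfdef
  rw [eq_bot_iff]
  intro x hx
  simp only [Subgroup.mem_iInf, Subgroup.mem_map] at hx
  obtain ⟨y₀, _, hy₀⟩ := hx 0
  set A : ℕ → Set F := fun k =>
    ((R ⊓ gammaHat F k : Subgroup F) : Set F) ∩ {z | (↑y₀ : F)⁻¹ * z ∈ Q} with hAdef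
  have hclosed : ∀ k, IsClosed (A k) := by
    intro k
    apply IsClosed.inter
    · rw [Subgroup.coe_inf]
      exact hRclosed.inter (gammaHat_isClosed k)
    · exact IsClosed.preimage (continuous_const.mul continuous_id)
        (Subgroup.isClosed_topologicalClosure _)
  have hne : ∀ k, (A k).Nonempty := by
    intro k
    obtain ⟨y, hy, hyx⟩ := hx k
    refine ⟨(y : F), Subgroup.mem_subgroupOf.mp hy, ?_⟩
    have hfy : f y₀ = f y := hy₀.trans hyx.symm
    have : y₀⁻¹ * y ∈ Q.subgroupOf R := QuotientGroup.eq.mp hfy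
    have h2 : ((y₀⁻¹ * y : R) : F) ∈ Q := Subgroup.mem_subgroupOf.mp this
    simpa using h2
  have hanti : Antitone A := by
    intro i j hij
    apply Set.inter_subset_inter_left
    intro z hz
    rcases hz with ⟨hz1, hz2⟩
    exact ⟨hz1, gammaHat_antitone hij hz2⟩
  have hdir : Directed (· ⊇ ·) A := fun i j =>
    ⟨max i j, hanti (le_max_left i j), hanti (le_max_right i j)⟩
  obtain ⟨z, hz⟩ := IsCompact.nonempty_iInter_of_directed_nonempty_isCompact_isClosed
    A hdir hne (fun k => (hclosed k).isCompact) hclosed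
  simp only [Set.mem_iInter] at hz
  have hz1 : z = 1 := by
    apply gammaHat_inter_trivial p h.proP
    intro k
    exact ((hz k).1 : z ∈ R ⊓ gammaHat F k).2
  have hz2 : (↑y₀ : F)⁻¹ ∈ Q := by
    have := (hz 0).2
    simp only [Set.mem_setOf_eq, hz1, mul_one] at this
    exact this
  have hy₀Q : y₀ ∈ Q.subgroupOf R := Subgroup.mem_subgroupOf.mpr (by
    simpa using Q.inv_mem hz2)
  have : f y₀ = 1 := (QuotientGroup.eq_one_iff y₀).mpr hy₀Q
  rw [← hy₀, this]
  exact Subgroup.one_mem ⊥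

end Statement6
end

section
/- Let G be a discrete group with a finite 2-dimensional classifying space, presented as G = F/R with F free of rank d and R normally generated by r relators coming from the classifying 2-complex. Then the relation module N = R/[R,R] is a free ℤ[G]-module, freely generated by the images of the r relators. -/
/-!
Statement 14: for a group `G` with a finite aspherical 2-dimensional classifying
(presentation) complex, the relation module `N = R/[R,R]` is a free `ℤ[G]`-module on the
images of the relators.  The classifying 2-complex is encoded by the exactness of the
cellular chain complex `0 → ℤ[G]^r → ℤ[G]^d → ℤ[G] → ℤ → 0` of its universal cover, whose
second differential is given by the Fox derivatives of the relators.
-/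

noncomputable section

namespace Statement14

variable {d : ℕ} {G : Type} [Group G] (ρ : FreeGroup (Fin d) →* G)

/-- The conjugation action of the free group on the abelianized kernel (relation module),
as a homomorphism to additive automorphisms (written as `ℤ`-linear equivalences). -/
def conjRep : FreeGroup (Fin d) →*
    (Additive (Abelianization ρ.ker) ≃ₗ[ℤ] Additive (Abelianization ρ.ker)) where
  toFun f :=
    (MulEquiv.toAdditive
      { toFun := Abelianization.map (MulAut.conjNormal f).toMonoidHom
        invFun := Abelianization.map (MulAut.conjNormal f⁻¹).toMonoidHom
        left_inv := fun a => by
          rw [Abelianization.map_map_apply]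
          rw [show (MulAut.conjNormal (G := FreeGroup (Fin d)) (H := ρ.ker)
              f⁻¹).toMonoidHom.comp (MulAut.conjNormal f).toMonoidHom = MonoidHom.id _ by
            ext x
            simp]
          simp
        right_inv := fun a => by
          rw [Abelianization.map_map_apply]
          rw [show (MulAut.conjNormal (G := FreeGroup (Fin d)) (H := ρ.ker)
              f).toMonoidHom.comp (MulAut.conjNormal f⁻¹).toMonoidHom = MonoidHom.id _ by
            ext x
            simp]
          simp
        map_mul' := map_mul _ }).toIntLinearEquiv
  map_one' := by
    apply LinearEquiv.toLinearMap_injective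
    apply LinearMap.ext
    rintro a
    show (Abelianization.map (MulAut.conjNormal (1 : FreeGroup (Fin d))).toMonoidHom) _ = _
    rw [show (MulAut.conjNormal (G := FreeGroup (Fin d))
        (H := ρ.ker) (1 : FreeGroup (Fin d))).toMonoidHom = MonoidHom.id _ by ext x; simp]
    simp
    rfl
  map_mul' f g := by
    apply LinearEquiv.toLinearMap_injective
    apply LinearMap.ext
    rintro a
    show (Abelianization.map _) _ = (Abelianization.map _) ((Abelianization.map _) _)
    rw [Abelianization.map_map_apply]
    congr 1
    ext x
    simp [mul_assoc]

/-- The representation of `G` on the relation module `R/[R,R]`, obtained by descending the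
conjugation action of the free group along `ρ`. -/
def relationRep (hρ : Function.Surjective ρ) :
    Representation ℤ G (Additive (Abelianization ρ.ker)) :=
  { toFun := fun g =>
      (QuotientGroup.lift ρ.ker (conjRep ρ)
        (by
          intro f hf
          apply LinearEquiv.toLinearMap_injective
          apply LinearMap.ext
          rintro a
          induction a using Quotient.inductionOn with
          | h x =>
            show (Abelianization.map (MulAut.conjNormal f).toMonoidHom)
              (Abelianization.of x) = Abelianization.of x
            rw [Abelianization.map_of]
            simp only [MulEquiv.coe_toMonoidHom]
            have : (MulAut.conjNormal f) x = (⟨f, hf⟩ : ρ.ker) * x * (⟨f, hf⟩ : ρ.ker)⁻¹ := by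
              ext
              simp [MulAut.conjNormal]
              rfl
            rw [this]
            simp [mul_comm, mul_assoc])
        ((QuotientGroup.quotientKerEquivOfSurjective ρ hρ).symm g)).toLinearMap
    map_one' := by
      simp only [map_one]
      rfl
    map_mul' := fun g h => by simp }

variable (G) in
/-- The first differential `ℤ[G]^d → ℤ[G]` of the cellular chain complex of the universal
cover of the presentation complex, `e_j ↦ 1 - x_j`. -/
def d1Map (xg : Fin d → G) :
    (Fin d → MonoidAlgebra ℤ G) →ₗ[MonoidAlgebra ℤ G] MonoidAlgebra ℤ G where
  toFun v := ∑ j, v j * (1 - MonoidAlgebra.single (xg j) 1)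
  map_add' a b := by simp [add_mul, Finset.sum_add_distrib]
  map_smul' m a := by
    simp only [Pi.smul_apply, smul_eq_mul, RingHom.id_apply, Finset.mul_sum, mul_assoc]

/-- The augmentation `ℤ[G] → ℤ`. -/
def aug : MonoidAlgebra ℤ G →+* ℤ :=
  ((MonoidAlgebra.lift ℤ ℤ G) 1).toRingHom

section Aux

variable (c : FreeGroup (Fin d) → (Fin d → MonoidAlgebra ℤ G))
variable (hc : ∀ u v : FreeGroup (Fin d),
    c (u * v) = c u + MonoidAlgebra.single (ρ u) (1 : ℤ) • c v)

include hc in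
theorem c_one : c 1 = 0 := by
  have h := hc 1 1
  rw [mul_one, map_one, ← MonoidAlgebra.one_def, one_smul] at h
  exact (add_eq_left.mp h.symm)

include hc in
theorem c_conj (f x : FreeGroup (Fin d)) (hx : ρ x = 1) :
    c (f * x * f⁻¹) = MonoidAlgebra.single (ρ f) (1 : ℤ) • c x := by
  have h0 : c 1 = 0 := c_one ρ c hc
  have h1 : c f + MonoidAlgebra.single (ρ f) (1 : ℤ) • c f⁻¹ = 0 := by
    have h := hc f f⁻¹
    rw [mul_inv_cancel, h0] at h
    exact h.symm
  calc c (f * x * f⁻¹) = c (f * (x * f⁻¹)) := by rw [mul_assoc]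
    _ = c f + MonoidAlgebra.single (ρ f) (1 : ℤ) •
        (c x + MonoidAlgebra.single (ρ x) (1 : ℤ) • c f⁻¹) := by rw [hc, hc]
    _ = MonoidAlgebra.single (ρ f) (1 : ℤ) • c x +
        (c f + MonoidAlgebra.single (ρ f) (1 : ℤ) • c f⁻¹) := by
        rw [hx, ← MonoidAlgebra.one_def, one_smul, smul_add]; abel
    _ = MonoidAlgebra.single (ρ f) (1 : ℤ) • c x := by rw [h1, add_zero]

/-- The Fox-derivative map on the relation module, as an additive homomorphism. -/
def thetaAdd : Additive (Abelianization ρ.ker) →+ (Fin d → MonoidAlgebra ℤ G) :=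
  MonoidHom.toAdditiveLeft <| Abelianization.lift
    { toFun := fun x => Multiplicative.ofAdd (c (x : ρ.ker).1)
      map_one' := congrArg Multiplicative.ofAdd (c_one ρ c hc)
      map_mul' := fun x y => congrArg Multiplicative.ofAdd (by
        show c (x.1 * y.1) = c x.1 + c y.1
        rw [hc, MonoidHom.mem_ker.mp x.2, ← MonoidAlgebra.one_def, one_smul]) }

theorem thetaAdd_of (x : ρ.ker) :
    thetaAdd ρ c hc (Additive.ofMul (Abelianization.of x)) = c x.1 := rfl

theorem ker_conj_mem (f : FreeGroup (Fin d)) (x : ρ.ker) : f * ↑x * f⁻¹ ∈ ρ.ker := by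
  exact (MonoidHom.normal_ker ρ).conj_mem _ x.2 f

theorem relationRep_of (hρ : Function.Surjective ρ) (f : FreeGroup (Fin d)) (x : ρ.ker) :
    relationRep ρ hρ (ρ f) (Additive.ofMul (Abelianization.of x)) =
      Additive.ofMul (Abelianization.of (⟨f * ↑x * f⁻¹, ker_conj_mem ρ f x⟩ : ρ.ker)) := by
  have hsymm : (QuotientGroup.quotientKerEquivOfSurjective ρ hρ).symm (ρ f)
      = (f : FreeGroup (Fin d) ⧸ ρ.ker) := by
    rw [MulEquiv.symm_apply_eq]; rfl
  have h1 : relationRep ρ hρ (ρ f) = (conjRep ρ f).toLinearMap := by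
    simp only [relationRep, MonoidHom.coe_mk, OneHom.coe_mk]
    rw [hsymm]
    exact congrArg LinearEquiv.toLinearMap (QuotientGroup.lift_mk _ _ f)
  rw [h1]
  show Additive.ofMul
      ((Abelianization.map (MulAut.conjNormal f).toMonoidHom) (Abelianization.of x)) = _
  rw [Abelianization.map_of]
  congr 1

/-- The canonical map from `R/[R,R]` to the module `N`. -/
def toM (hρ : Function.Surjective ρ) (x : ρ.ker) : (relationRep ρ hρ).asModule :=
  Additive.ofMul (Abelianization.of x)

theorem single_smul_of (hρ : Function.Surjective ρ) (f : FreeGroup (Fin d)) (x : ρ.ker) :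
    (MonoidAlgebra.single (ρ f) (1 : ℤ)) • toM ρ hρ x
      = toM ρ hρ ⟨f * ↑x * f⁻¹, ker_conj_mem ρ f x⟩ := by
  show (relationRep ρ hρ).asAlgebraHom (MonoidAlgebra.single (ρ f) 1)
      (Additive.ofMul (Abelianization.of x)) = _
  rw [Representation.asAlgebraHom_single_one]
  exact relationRep_of ρ hρ f x

include hc in
theorem theta_rel (hρ : Function.Surjective ρ) (f : FreeGroup (Fin d))
    (n : Additive (Abelianization ρ.ker)) :
    thetaAdd ρ c hc (relationRep ρ hρ (ρ f) n) =
      MonoidAlgebra.single (ρ f) (1 : ℤ) • thetaAdd ρ c hc n := by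
  induction n using Quotient.inductionOn with
  | h x =>
    rw [show (Quotient.mk _ x : Additive (Abelianization ρ.ker))
        = Additive.ofMul (Abelianization.of x) from rfl]
    rw [relationRep_of ρ hρ f x, thetaAdd_of, thetaAdd_of]
    exact c_conj ρ c hc f x (MonoidHom.mem_ker.mp x.2)

/-- The Fox-derivative map on the relation module, as a `ℤ[G]`-linear map. -/
def thetaL (hρ : Function.Surjective ρ) :
    (relationRep ρ hρ).asModule →ₗ[MonoidAlgebra ℤ G] (Fin d → MonoidAlgebra ℤ G) where
  toFun := thetaAdd ρ c hc
  map_add' := map_add _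
  map_smul' := by
    intro m n
    simp only [RingHom.id_apply]
    induction m using MonoidAlgebra.induction with
    | zero => rw [zero_smul, zero_smul]; exact map_zero (thetaAdd ρ c hc)
    | single_add g a m hg ha ih =>
      rw [add_smul, add_smul, show thetaAdd ρ c hc (MonoidAlgebra.single g a • n + m • n) =
        thetaAdd ρ c hc (MonoidAlgebra.single g a • n) + thetaAdd ρ c hc (m • n) from
        map_add (thetaAdd ρ c hc) _ _, ih]
      congr 1
      obtain ⟨f, rfl⟩ := hρ g
      have hsm : (MonoidAlgebra.single (ρ f) a) • n
          = a • ((relationRep ρ hρ) (ρ f) n) := by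
        show (relationRep ρ hρ).asAlgebraHom (MonoidAlgebra.single (ρ f) a) n = _
        rw [Representation.asAlgebraHom_single]
        rfl
      rw [hsm, map_zsmul, theta_rel ρ c hc hρ f n, ← smul_assoc]
      congr 1
      ext g'
      simp [Finsupp.smul_single]

/-- The evaluation map `ℤ[G]^r → N` sending the `i`-th basis vector to `nw i`. -/
def phiL (hρ : Function.Surjective ρ) {r : ℕ} (nw : Fin r → (relationRep ρ hρ).asModule) :
    (Fin r → MonoidAlgebra ℤ G) →ₗ[MonoidAlgebra ℤ G] (relationRep ρ hρ).asModule where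
  toFun v := ∑ i, v i • nw i
  map_add' a b := by simp [add_smul, Finset.sum_add_distrib]
  map_smul' m v := by simp [mul_smul, Finset.smul_sum]

theorem phiL_single (hρ : Function.Surjective ρ) {r : ℕ}
    (nw : Fin r → (relationRep ρ hρ).asModule) (i : Fin r) (m : MonoidAlgebra ℤ G) :
    phiL ρ hρ nw (Pi.single i m) = m • nw i := by
  simp [phiL, Pi.single_apply, ite_smul, Finset.sum_ite_eq']

end Aux

/-- Let `G` be a discrete group with a finite 2-dimensional classifying
space, presented as `G = F/R` with `F` free of rank `d` and `R` normally generated by `r`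
relators coming from the classifying 2-complex (so that the cellular chain complex
`0 → ℤ[G]^r → ℤ[G]^d → ℤ[G] → ℤ → 0` of the universal cover, with second differential given
by the Fox derivative cocycle `c`, is exact).  Then the relation module `N = R/[R,R]` is a
free `ℤ[G]`-module, freely generated by the images of the `r` relators. -/
theorem statement14 (r : ℕ) (hρ : Function.Surjective ρ)
    (w : Fin r → FreeGroup (Fin d))
    (hw : Subgroup.normalClosure (Set.range w) = ρ.ker)
    -- the Fox derivative cocycle of the presentation:
    (c : FreeGroup (Fin d) → (Fin d → MonoidAlgebra ℤ G))
    (hc_cocycle : ∀ u v : FreeGroup (Fin d),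
      c (u * v) = c u + MonoidAlgebra.single (ρ u) (1 : ℤ) • c v)
    (hc_gen : ∀ j : Fin d, c (FreeGroup.of j) = Pi.single j 1)
    -- the second differential of the cellular chain complex, `e_i ↦ ∂(w_i)`:
    (d2 : (Fin r → MonoidAlgebra ℤ G) →ₗ[MonoidAlgebra ℤ G] (Fin d → MonoidAlgebra ℤ G))
    (hd2 : ∀ i : Fin r, d2 (Pi.single i 1) = c (w i))
    -- exactness of `0 → ℤ[G]^r → ℤ[G]^d → ℤ[G] → ℤ → 0`:
    (hex2 : Function.Injective d2)
    (hex1 : Function.Exact d2 (d1Map G (fun j => ρ (FreeGroup.of j))))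
    (hex0 : Function.Exact (d1Map G (fun j => ρ (FreeGroup.of j))) (aug (G := G)))
    (hsur : Function.Surjective (aug (G := G))) :
    ∃ b : Module.Basis (Fin r) (MonoidAlgebra ℤ G) (relationRep ρ hρ).asModule,
      ∀ i : Fin r,
        b i = (Additive.ofMul (Abelianization.of
          (⟨w i, hw ▸ Subgroup.subset_normalClosure (Set.mem_range_self i)⟩ : ρ.ker))
            : (relationRep ρ hρ).asModule) := by
  classical
  have hwk : ∀ i, w i ∈ ρ.ker := fun i =>
    hw ▸ Subgroup.subset_normalClosure (Set.mem_range_self i)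
  let nw : Fin r → (relationRep ρ hρ).asModule := fun i => toM ρ hρ ⟨w i, hwk i⟩
  let φ := phiL ρ hρ nw
  let θ := thetaL ρ c hc_cocycle hρ
  have hcomp : θ.comp φ = d2 := by
    apply Module.Basis.ext (Pi.basisFun (MonoidAlgebra ℤ G) (Fin r))
    intro i
    have hb : (Pi.basisFun (MonoidAlgebra ℤ G) (Fin r)) i
        = Pi.single i (1 : MonoidAlgebra ℤ G) := by
      ext j
      simp [Pi.basisFun_apply]
    rw [hb, hd2, LinearMap.comp_apply]
    rw [show φ (Pi.single i 1) = phiL ρ hρ nw (Pi.single i 1) from rfl, phiL_single, one_smul]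
    exact thetaAdd_of ρ c hc_cocycle ⟨w i, hwk i⟩
  have hinj : Function.Injective φ := by
    intro a b hab
    apply hex2
    have h2 : θ.comp φ a = θ.comp φ b := by
      rw [LinearMap.comp_apply, LinearMap.comp_apply, hab]
    rwa [hcomp] at h2
  have hsurj : Function.Surjective φ := by
    have key : ∀ x (_ : x ∈ Subgroup.normalClosure (Set.range w)) (h : x ∈ ρ.ker),
        toM ρ hρ ⟨x, h⟩ ∈ LinearMap.range φ := by
      intro x hx
      induction hx using Subgroup.closure_induction with
      | mem y hy =>
        intro h
        rw [Group.mem_conjugatesOfSet_iff] at hy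
        obtain ⟨a, ⟨i, rfl⟩, hconj⟩ := hy
        obtain ⟨f, rfl⟩ := isConj_iff.mp hconj
        refine ⟨Pi.single i (MonoidAlgebra.single (ρ f) (1 : ℤ)), ?_⟩
        show phiL ρ hρ nw _ = _
        rw [phiL_single]
        exact single_smul_of ρ hρ f ⟨w i, hwk i⟩
      | one =>
        intro h
        have h1 : toM ρ hρ ⟨1, h⟩ = 0 := by
          show Additive.ofMul (Abelianization.of (⟨1, h⟩ : ρ.ker)) = _
          rw [show ((⟨1, h⟩ : ρ.ker)) = 1 from rfl, map_one]
          rfl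
        rw [h1]
        exact Submodule.zero_mem _
      | mul x y hx hy ihx ihy =>
        intro h
        have hx' : x ∈ ρ.ker := hw ▸ hx
        have hy' : y ∈ ρ.ker := hw ▸ hy
        have h1 : toM ρ hρ ⟨x * y, h⟩ = toM ρ hρ ⟨x, hx'⟩ + toM ρ hρ ⟨y, hy'⟩ := by
          show Additive.ofMul (Abelianization.of (⟨x, hx'⟩ * ⟨y, hy'⟩ : ρ.ker)) = _
          rw [map_mul]
          rfl
        rw [h1]
        exact Submodule.add_mem _ (ihx hx') (ihy hy')
      | inv x hx ihx =>
        intro h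
        have hx' : x ∈ ρ.ker := hw ▸ hx
        have h1 : toM ρ hρ ⟨x⁻¹, h⟩ = -toM ρ hρ ⟨x, hx'⟩ := by
          show Additive.ofMul (Abelianization.of ((⟨x, hx'⟩ : ρ.ker)⁻¹)) = _
          rw [map_inv]
          rfl
        rw [h1]
        exact Submodule.neg_mem _ (ihx hx')
    intro n
    suffices h : n ∈ LinearMap.range φ by exact h
    induction n using Quotient.inductionOn with
    | h x => exact key x.1 (by rw [hw]; exact x.2) x.2
  let e := LinearEquiv.ofBijective φ ⟨hinj, hsurj⟩
  refine ⟨(Pi.basisFun (MonoidAlgebra ℤ G) (Fin r)).map e, fun i => ?_⟩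
  have hb : (Pi.basisFun (MonoidAlgebra ℤ G) (Fin r)) i
      = Pi.single i (1 : MonoidAlgebra ℤ G) := by
    ext j
    simp [Pi.basisFun_apply]
  rw [Module.Basis.map_apply, hb]
  show φ (Pi.single i 1) = _
  rw [show φ (Pi.single i 1) = phiL ρ hρ nw (Pi.single i 1) from rfl, phiL_single, one_smul]
  rfl

end Statement14
end
end
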